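/- Let R be a commutative ring and let M be a w-flat R-module, i.e., M_m is a flat R_m-module for every m ∈ w-Max(R). Then the following are equivalent: (1) A ⊗_R M is not GV-torsion for every nonzero w-module A; (2) B ⊗_R M is not GV-torsion for every nonzero GV-torsion-free R-module B; (3) M/IM is not GV-torsion for every proper w-ideal I of R; (4) M/mM is not GV-torsion for every m ∈ w-Max(R); (5) M_m/mM_m ≠ 0 for every m ∈ w-Max(R); (6) M_m is a faithfully flat R_m-module for every m ∈ w-Max(R). (A module M satisfying these conditions is called w-faithfully flat.) -/

import Mathlib

universe u v

section WDefs

variable (R : Type u) [CommRing R]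

/-- The canonical `R`-linear map `R → Hom_R(J, R)`, `r ↦ (j ↦ r * j)`. -/
def gvCanonicalMap (J : Ideal R) : R →ₗ[R] (J →ₗ[R] R) where
  toFun r := r • (J.subtype)
  map_add' x y := add_smul x y _
  map_smul' r x := by simp [mul_smul]

/-- A finitely generated ideal `J` of `R` is a GV-ideal (Glaz–Vasconcelos ideal)
if the canonical map `R → Hom_R(J, R)` is an isomorphism. -/
def IsGVIdeal (J : Ideal R) : Prop :=
  J.FG ∧ Function.Bijective (gvCanonicalMap R J)

/-- An ideal `I` of `R` is a w-ideal if whenever `J x ⊆ I` for some GV-ideal `J`,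
then `x ∈ I`. -/
def IsWIdeal (I : Ideal R) : Prop :=
  ∀ x : R, (∃ J : Ideal R, IsGVIdeal R J ∧ ∀ j ∈ J, j * x ∈ I) → x ∈ I

/-- `m` is a maximal w-ideal: maximal among the proper w-ideals of `R`. -/
def IsMaxWIdeal (m : Ideal R) : Prop :=
  IsWIdeal R m ∧ m ≠ ⊤ ∧ ∀ I : Ideal R, IsWIdeal R I → I ≠ ⊤ → m ≤ I → I = m

variable {M : Type v} [AddCommGroup M] [Module R M]

/-- `x` is a GV-torsion element if it is killed by some GV-ideal. -/
def IsGVTorsionElem (x : M) : Prop :=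
  ∃ J : Ideal R, IsGVIdeal R J ∧ ∀ j ∈ J, j • x = 0

variable (M)

/-- `M` is GV-torsion-free if it has no nonzero GV-torsion element. -/
def IsGVTorsionFree : Prop := ∀ x : M, IsGVTorsionElem R x → x = 0

/-- `M` is GV-torsion if all its elements are GV-torsion. -/
def IsGVTorsion : Prop := ∀ x : M, IsGVTorsionElem R x

/-- `M` is a w-module: GV-torsion-free and every map from a GV-ideal to `M`
extends to `R`. -/
def IsWModule : Prop :=
  IsGVTorsionFree R M ∧
    ∀ J : Ideal R, IsGVIdeal R J → ∀ f : J →ₗ[R] M,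
      ∃ g : R →ₗ[R] M, ∀ x : J, g (x : R) = f x

end WDefs

section Lemmas

variable {R : Type u} [CommRing R]

lemma gvCanonicalMap_apply (J : Ideal R) (r : R) (x : J) :
    gvCanonicalMap R J r x = r * x := rfl

lemma IsGVIdeal.eq_zero {J : Ideal R} (hJ : IsGVIdeal R J) {r : R}
    (h : ∀ j ∈ J, r * j = 0) : r = 0 := by
  have : gvCanonicalMap R J r = gvCanonicalMap R J 0 := by
    ext x
    simp [gvCanonicalMap_apply, h x x.2]
  exact hJ.2.1 this

lemma IsGVIdeal.eq_of {J : Ideal R} (hJ : IsGVIdeal R J) {a b : R}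
    (h : ∀ j ∈ J, a * j = b * j) : a = b := by
  have : a - b = 0 := hJ.eq_zero (fun j hj => by rw [sub_mul, h j hj, sub_self])
  exact sub_eq_zero.mp this

lemma isGVIdeal_top : IsGVIdeal R (⊤ : Ideal R) := by
  refine ⟨⟨{1}, by simp⟩, ?_, ?_⟩
  · intro r r' h
    have := congrArg (fun f => f ⟨1, trivial⟩) h
    simpa [gvCanonicalMap_apply] using this
  · intro f
    refine ⟨f ⟨1, trivial⟩, ?_⟩
    ext ⟨x, hx⟩
    have : (⟨x, hx⟩ : (⊤ : Ideal R)) = x • ⟨1, trivial⟩ := by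
      ext; simp
    rw [gvCanonicalMap_apply, this, map_smul]
    simp [mul_comm]

lemma IsGVIdeal.mul {J₁ J₂ : Ideal R} (h₁ : IsGVIdeal R J₁) (h₂ : IsGVIdeal R J₂) :
    IsGVIdeal R (J₁ * J₂) := by
  refine ⟨Submodule.FG.mul h₁.1 h₂.1, ?_, ?_⟩
  · intro r r' h
    have key : ∀ j ∈ J₁ * J₂, (r - r') * j = 0 := by
      intro j hj
      have := congrArg (fun f => f ⟨j, hj⟩) h
      simp only [gvCanonicalMap_apply] at this
      rw [sub_mul, this, sub_self]
    refine sub_eq_zero.mp (h₁.eq_zero (fun j hj => h₂.eq_zero (fun k hk => ?_)))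
    rw [mul_assoc]
    exact key (j * k) (Ideal.mul_mem_mul hj hk)
  · intro f
    have key : ∀ j₂ : J₂, ∃ r : R, ∀ (j₁ : R) (h : j₁ ∈ J₁),
        f ⟨j₁ * (j₂ : R), Ideal.mul_mem_mul h j₂.2⟩ = r * j₁ := by
      rintro ⟨j₂, hj₂⟩
      set ι : J₁ →ₗ[R] (J₁ * J₂ : Ideal R) :=
        { toFun := fun x => ⟨(x : R) * j₂, Ideal.mul_mem_mul x.2 hj₂⟩
          map_add' := by intro x y; ext; simp [add_mul]
          map_smul' := by intro c x; ext; simp; ring } with hι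
      obtain ⟨r, hr⟩ := h₁.2.2 (f ∘ₗ ι)
      refine ⟨r, fun j₁ hj₁ => ?_⟩
      have := congrArg (fun g => g ⟨j₁, hj₁⟩) hr
      simpa [hι, gvCanonicalMap_apply, mul_comm] using this.symm
    choose c hc using key
    have cuniq : ∀ (j₂ : J₂) (r : R),
        (∀ (j₁ : R) (h : j₁ ∈ J₁), f ⟨j₁ * (j₂ : R), Ideal.mul_mem_mul h j₂.2⟩ = r * j₁) →
        c j₂ = r := by
      intro j₂ r hr
      exact h₁.eq_of (fun j hj => by rw [← hc j₂ j hj, hr j hj])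
    set cmap : J₂ →ₗ[R] R :=
      { toFun := c
        map_add' := by
          intro x y
          refine (cuniq (x + y) (c x + c y) (fun j₁ hj₁ => ?_)).trans rfl
          have e : (⟨j₁ * ((x + y : J₂) : R), Ideal.mul_mem_mul hj₁ (x + y).2⟩ :
              (J₁ * J₂ : Ideal R)) =
              ⟨j₁ * (x : R), Ideal.mul_mem_mul hj₁ x.2⟩ +
              ⟨j₁ * (y : R), Ideal.mul_mem_mul hj₁ y.2⟩ := by
            ext; simp [mul_add]
          rw [e, map_add, hc x j₁ hj₁, hc y j₁ hj₁, add_mul]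
        map_smul' := by
          intro r x
          refine (cuniq (r • x) (r * c x) (fun j₁ hj₁ => ?_)).trans rfl
          have e : (⟨j₁ * ((r • x : J₂) : R), Ideal.mul_mem_mul hj₁ (r • x).2⟩ :
              (J₁ * J₂ : Ideal R)) =
              r • ⟨j₁ * (x : R), Ideal.mul_mem_mul hj₁ x.2⟩ := by
            ext; simp; ring
          rw [e, map_smul, hc x j₁ hj₁, smul_eq_mul]; ring } with hcmap
    obtain ⟨d, hd⟩ := h₂.2.2 cmap
    have hd' : ∀ j₂ : J₂, c j₂ = d * (j₂ : R) := by
      intro j₂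
      have := congrArg (fun g => g j₂) hd
      simpa [gvCanonicalMap_apply, hcmap] using this.symm
    refine ⟨d, ?_⟩
    ext ⟨x, hx⟩
    rw [gvCanonicalMap_apply]
    induction hx using Submodule.mul_induction_on' with
    | mem_mul_mem m hm n hn =>
      rw [show f ⟨m * n, Ideal.mul_mem_mul hm hn⟩ = c ⟨n, hn⟩ * m from hc ⟨n, hn⟩ m hm,
        hd' ⟨n, hn⟩]
      ring
    | add x hx y hy ihx ihy =>
      have e : (⟨x + y, add_mem hx hy⟩ : (J₁ * J₂ : Ideal R)) = ⟨x, hx⟩ + ⟨y, hy⟩ := rfl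
      rw [e, map_add, ← ihx, ← ihy, Submodule.coe_add, mul_add]

end Lemmas

section WSub

variable {R : Type u} [CommRing R]

lemma isGVIdeal_prod {ι : Type*} (s : Finset ι) (f : ι → Ideal R)
    (h : ∀ i ∈ s, IsGVIdeal R (f i)) : IsGVIdeal R (∏ i ∈ s, f i) :=
  Finset.prod_induction f (IsGVIdeal R) (fun _ _ ha hb => ha.mul hb)
    (by rw [Ideal.one_eq_top]; exact isGVIdeal_top) h

variable {M : Type v} [AddCommGroup M] [Module R M]

/-- The "w-closure" of a submodule. -/
def wSub (N : Submodule R M) : Submodule R M where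
  carrier := {x | ∃ J : Ideal R, IsGVIdeal R J ∧ ∀ j ∈ J, j • x ∈ N}
  add_mem' := by
    rintro a b ⟨J₁, h₁, ha⟩ ⟨J₂, h₂, hb⟩
    exact ⟨J₁ * J₂, h₁.mul h₂, fun j hj => by
      rw [smul_add]
      exact add_mem (ha j (Ideal.mul_le_left hj)) (hb j (Ideal.mul_le_right hj))⟩
  zero_mem' := ⟨⊤, isGVIdeal_top, fun j _ => by simp⟩
  smul_mem' := by
    rintro r x ⟨J, hJ, hx⟩
    exact ⟨J, hJ, fun j hj => by
      rw [smul_comm]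
      exact Submodule.smul_mem _ r (hx j hj)⟩

lemma mem_wSub {N : Submodule R M} {x : M} :
    x ∈ wSub N ↔ ∃ J : Ideal R, IsGVIdeal R J ∧ ∀ j ∈ J, j • x ∈ N := Iff.rfl

lemma le_wSub {N : Submodule R M} : N ≤ wSub N :=
  fun _ hx => ⟨⊤, isGVIdeal_top, fun j _ => Submodule.smul_mem _ j hx⟩

lemma wSub_mem_of_gv {N : Submodule R M} {x : M} {J : Ideal R} (hJ : IsGVIdeal R J)
    (h : ∀ j ∈ J, j • x ∈ wSub N) : x ∈ wSub N := by
  obtain ⟨s, hs⟩ := hJ.1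
  have hgen : ∀ g : s, (g : R) • x ∈ wSub N := fun g =>
    h g (by rw [← hs]; exact Ideal.subset_span g.2)
  choose K hK hKmem using fun g : s => (hgen g : ∃ J : Ideal R, IsGVIdeal R J ∧ ∀ j ∈ J, j • ((g : R) • x) ∈ N)
  set P : Ideal R := ∏ g ∈ s.attach, K g with hP
  have hPgv : IsGVIdeal R P := isGVIdeal_prod _ _ (fun g _ => hK g)
  have hPle : ∀ g : s, P ≤ K g := fun g =>
    le_trans Ideal.prod_le_inf (Finset.inf_le (Finset.mem_attach _ g))
  refine ⟨P * J, hPgv.mul hJ, fun t ht => ?_⟩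
  refine Submodule.mul_induction_on ht (fun p hp j hj => ?_)
    (fun a b hab hbb => by rw [add_smul]; exact add_mem hab hbb)
  have hj' : j ∈ Ideal.span (s : Set R) := by rw [hs]; exact hj
  clear hj
  induction hj' using Submodule.span_induction with
  | mem g hg =>
    rw [mul_smul]
    exact hKmem ⟨g, hg⟩ p (hPle ⟨g, hg⟩ hp)
  | zero => simp
  | add a b _ _ iha ihb =>
    rw [mul_add, add_smul]
    exact add_mem iha ihb
  | smul r a _ iha =>
    rw [smul_eq_mul, show p * (r * a) = r * (p * a) by ring, mul_smul]
    exact Submodule.smul_mem _ r iha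

lemma isWIdeal_wSub (I : Ideal R) : IsWIdeal R (wSub I) := by
  rintro x ⟨J, hJ, hx⟩
  exact wSub_mem_of_gv hJ (fun j hj => by rw [smul_eq_mul]; exact hx j hj)

lemma wSub_le_of_wIdeal {I m : Ideal R} (hm : IsWIdeal R m) (h : I ≤ m) :
    wSub I ≤ m := by
  rintro x ⟨J, hJ, hx⟩
  exact hm x ⟨J, hJ, fun j hj => h (by simpa [smul_eq_mul] using hx j hj)⟩

lemma IsWIdeal.eq_top_of_gv_le {I J : Ideal R} (hI : IsWIdeal R I) (hJ : IsGVIdeal R J)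
    (h : J ≤ I) : I = ⊤ := by
  rw [Ideal.eq_top_iff_one]
  exact hI 1 ⟨J, hJ, fun j hj => by simpa using h hj⟩

lemma IsGVIdeal.not_le_max {J m : Ideal R} (hJ : IsGVIdeal R J) (hm : IsMaxWIdeal R m) :
    ¬ J ≤ m := fun h => hm.2.1 (hm.1.eq_top_of_gv_le hJ h)

/-- Key lemma: if `I` strictly contains a maximal w-ideal, then `I` contains a GV-ideal. -/
lemma exists_gv_le {m I : Ideal R} (hm : IsMaxWIdeal R m) (hmI : m ≤ I) {t : R}
    (htI : t ∈ I) (htm : t ∉ m) : ∃ J : Ideal R, IsGVIdeal R J ∧ J ≤ I := by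
  by_cases h1 : (1 : R) ∈ wSub I
  · obtain ⟨J, hJ, hJ1⟩ := h1
    exact ⟨J, hJ, fun j hj => by simpa using hJ1 j hj⟩
  · exfalso
    have hw : IsWIdeal R (wSub (I : Submodule R R)) := isWIdeal_wSub I
    have hne : wSub (I : Submodule R R) ≠ (⊤ : Ideal R) := fun h =>
      h1 (h ▸ Submodule.mem_top)
    have heq : wSub (I : Submodule R R) = m := hm.2.2 _ hw hne (le_trans hmI le_wSub)
    exact htm (heq ▸ le_wSub htI)

lemma IsMaxWIdeal.isPrime {m : Ideal R} (hm : IsMaxWIdeal R m) : m.IsPrime := by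
  refine ⟨hm.2.1, ?_⟩
  intro a b hab
  by_contra hcon
  push_neg at hcon
  obtain ⟨ha, hb⟩ := hcon
  obtain ⟨Ja, hJa, hJaI⟩ := exists_gv_le hm (le_sup_left : m ≤ m ⊔ Ideal.span {a})
    (Submodule.mem_sup_right (Ideal.subset_span (Set.mem_singleton a))) ha
  obtain ⟨Jb, hJb, hJbI⟩ := exists_gv_le hm (le_sup_left : m ≤ m ⊔ Ideal.span {b})
    (Submodule.mem_sup_right (Ideal.subset_span (Set.mem_singleton b))) hb
  refine (hJa.mul hJb).not_le_max hm ?_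
  rw [Ideal.mul_le]
  intro r hr s hs
  obtain ⟨r₁, hr₁, r₂, hr₂, rfl⟩ := Submodule.mem_sup.mp (hJaI hr)
  obtain ⟨s₁, hs₁, s₂, hs₂, rfl⟩ := Submodule.mem_sup.mp (hJbI hs)
  obtain ⟨c, rfl⟩ := Ideal.mem_span_singleton'.mp hr₂
  obtain ⟨d, rfl⟩ := Ideal.mem_span_singleton'.mp hs₂
  have : (r₁ + c * a) * (s₁ + d * b) =
      r₁ * (s₁ + d * b) + (c * a) * s₁ + (c * d) * (a * b) := by ring
  rw [this]
  exact add_mem (add_mem (Ideal.mul_mem_right _ _ hr₁) (Ideal.mul_mem_left _ _ hs₁))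
    (Ideal.mul_mem_left _ _ hab)

lemma exists_maxWIdeal_ge {I : Ideal R} (hI : IsWIdeal R I) (hne : I ≠ ⊤) :
    ∃ m : Ideal R, IsMaxWIdeal R m ∧ I ≤ m := by
  set s : Set (Ideal R) := {K | IsWIdeal R K ∧ K ≠ ⊤} with hsdef
  have hchainub : ∀ c ⊆ s, IsChain (· ≤ ·) c → ∀ y ∈ c, ∃ ub ∈ s, ∀ z ∈ c, z ≤ ub := by
    intro c hcs hchain y hy
    refine ⟨sSup c, ⟨?_, ?_⟩, fun z hz => le_sSup hz⟩
    · -- sSup of chain of w-ideals is a w-ideal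
      rintro x ⟨J, hJ, hx⟩
      have hdir : DirectedOn (· ≤ ·) c := hchain.directedOn
      have hfg : (J * Ideal.span {x}).FG := Submodule.FG.mul hJ.1 (Submodule.fg_span_singleton x)
      have hle : J * Ideal.span {x} ≤ sSup c := by
        rw [Ideal.mul_le]
        intro r hr z hz
        obtain ⟨e, rfl⟩ := Ideal.mem_span_singleton'.mp hz
        rw [show r * (e * x) = e * (r * x) by ring]
        exact Ideal.mul_mem_left _ _ (hx r hr)
      obtain ⟨K, hKc, hKle⟩ :=
        (CompleteLattice.isCompactElement_iff_le_of_directed_sSup_le _ _).mp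
          ((Submodule.fg_iff_compact _).mp hfg) c ⟨y, hy⟩ hdir hle
      have hxK : x ∈ K := (hcs hKc).1 x ⟨J, hJ, fun j hj =>
        hKle (Ideal.mul_mem_mul hj (Ideal.subset_span (Set.mem_singleton x)))⟩
      exact le_sSup hKc hxK
    · -- sSup of chain is proper
      intro htop
      have h1 : (1 : R) ∈ sSup c := htop ▸ Submodule.mem_top
      obtain ⟨K, hKc, hK1⟩ := (Submodule.mem_sSup_of_directed ⟨y, hy⟩ hchain.directedOn).mp h1
      exact (hcs hKc).2 (Ideal.eq_top_iff_one _ |>.mpr hK1)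
  obtain ⟨m, hIm, hms, hmax⟩ := zorn_le_nonempty₀ s hchainub I ⟨hI, hne⟩
  exact ⟨m, ⟨hms.1, hms.2, fun K hK hKne hmK => le_antisymm (hmax ⟨hK, hKne⟩ hmK) hmK⟩, hIm⟩

end WSub

section Helpers

variable {R : Type u} [CommRing R]

lemma IsGVTorsion.of_surjective {N : Type*} {N' : Type*} [AddCommGroup N] [Module R N]
    [AddCommGroup N'] [Module R N'] (f : N →ₗ[R] N') (hf : Function.Surjective f)
    (h : IsGVTorsion R N) : IsGVTorsion R N' := by
  intro x
  obtain ⟨y, rfl⟩ := hf x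
  obtain ⟨J, hJ, hy⟩ := h y
  exact ⟨J, hJ, fun j hj => by rw [← map_smul, hy j hj, map_zero]⟩

variable {M : Type v} [AddCommGroup M] [Module R M]

lemma mem_smul_top_mk {m : Ideal R} [hp : m.IsPrime] {w : M}
    (hw : w ∈ m • (⊤ : Submodule R M)) (s : m.primeCompl) :
    LocalizedModule.mk w s ∈ m • (⊤ : Submodule R (LocalizedModule m.primeCompl M)) := by
  refine Submodule.smul_induction_on hw (fun a ha x _ => ?_) (fun w₁ w₂ ih₁ ih₂ => ?_)
  · rw [show LocalizedModule.mk (a • x) s = a • LocalizedModule.mk x s from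
      (LocalizedModule.smul'_mk a x s).symm]
    exact Submodule.smul_mem_smul ha Submodule.mem_top
  · have : LocalizedModule.mk (w₁ + w₂) s = LocalizedModule.mk w₁ s + LocalizedModule.mk w₂ s := by
      rw [LocalizedModule.mk_add_mk]
      rw [show s • w₁ + s • w₂ = s • (w₁ + w₂) by rw [smul_add]]
      exact (LocalizedModule.mk_cancel_common_left s s (w₁ + w₂)).symm
    rw [this]
    exact add_mem ih₁ ih₂

lemma loc_smul_top_iff (m : Ideal R) [hp : m.IsPrime] :
    m • (⊤ : Submodule R (LocalizedModule m.primeCompl M)) = ⊤ ↔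
    ∀ y : M, ∃ t ∈ m.primeCompl, t • y ∈ m • (⊤ : Submodule R M) := by
  constructor
  · intro h y
    have hy : LocalizedModule.mk y (1 : m.primeCompl) ∈
        m • (⊤ : Submodule R (LocalizedModule m.primeCompl M)) := by
      rw [h]; exact Submodule.mem_top
    have key : ∀ z ∈ m • (⊤ : Submodule R (LocalizedModule m.primeCompl M)),
        ∃ u ∈ m.primeCompl, ∃ w ∈ m • (⊤ : Submodule R M),
          u • z = LocalizedModule.mk w (1 : m.primeCompl) := by
      intro z hz
      refine Submodule.smul_induction_on hz (fun a ha x _ => ?_) ?_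
      · induction x using LocalizedModule.induction_on with
        | h y' s =>
          refine ⟨(s : R), s.2, a • y',
            Submodule.smul_mem_smul ha Submodule.mem_top, ?_⟩
          rw [show (s : R) • (a • LocalizedModule.mk y' s) = a • ((s : R) • LocalizedModule.mk y' s)
              by rw [smul_smul, smul_smul, mul_comm]]
          rw [LocalizedModule.smul'_mk, show ((s : R) • y') = s • y' from rfl,
            LocalizedModule.mk_cancel, LocalizedModule.smul'_mk]
      · rintro z₁ z₂ ⟨u₁, hu₁, w₁, hw₁, h₁⟩ ⟨u₂, hu₂, w₂, hw₂, h₂⟩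
        refine ⟨u₁ * u₂, mul_mem hu₁ hu₂, u₂ • w₁ + u₁ • w₂,
          add_mem (Submodule.smul_mem _ _ hw₁) (Submodule.smul_mem _ _ hw₂), ?_⟩
        rw [smul_add, show (u₁ * u₂) • z₁ = u₂ • (u₁ • z₁) by rw [smul_smul, mul_comm],
          show (u₁ * u₂) • z₂ = u₁ • (u₂ • z₂) by rw [smul_smul],
          h₁, h₂, LocalizedModule.smul'_mk, LocalizedModule.smul'_mk,
          LocalizedModule.mk_add_mk]
        simp
    obtain ⟨u, hu, w, hw, huw⟩ := key _ hy
    rw [LocalizedModule.smul'_mk] at huw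
    obtain ⟨v, hv⟩ := LocalizedModule.mk_eq.mp huw
    refine ⟨(v : R) * u, mul_mem v.2 hu, ?_⟩
    rw [mul_smul]
    have : (v : R) • (u • y) = (v : R) • w := by
      simpa [Submonoid.smul_def] using hv
    rw [this]
    exact Submodule.smul_mem _ _ hw
  · intro h
    rw [eq_top_iff]
    rintro z -
    induction z using LocalizedModule.induction_on with
    | h y s =>
      obtain ⟨t, ht, hty⟩ := h y
      have : LocalizedModule.mk y s = LocalizedModule.mk (t • y) (⟨t, ht⟩ * s) :=
        (LocalizedModule.mk_cancel_common_left ⟨t, ht⟩ s y).symm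
      rw [this]
      exact mem_smul_top_mk hty _

end Helpers

section Transfer

variable {R : Type u} [CommRing R]

lemma maxIdeal_smul_top_iff {m : Ideal R} [hp : m.IsPrime] {N : Type*} [AddCommGroup N]
    [Module R N] [Module (Localization.AtPrime m) N]
    [IsScalarTower R (Localization.AtPrime m) N] :
    m • (⊤ : Submodule R N) = ⊤ ↔
      (IsLocalRing.maximalIdeal (Localization.AtPrime m)) •
        (⊤ : Submodule (Localization.AtPrime m) N) = ⊤ := by
  constructor
  · intro h
    rw [eq_top_iff]
    rintro z -
    have hz : z ∈ m • (⊤ : Submodule R N) := by rw [h]; exact Submodule.mem_top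
    refine Submodule.smul_induction_on hz (fun a ha x _ => ?_) (fun x y ihx ihy => add_mem ihx ihy)
    rw [← algebraMap_smul (Localization.AtPrime m) a x]
    exact Submodule.smul_mem_smul
      ((IsLocalization.AtPrime.to_map_mem_maximal_iff _ m a).mpr ha) Submodule.mem_top
  · intro h
    rw [eq_top_iff]
    rintro z -
    have hz : z ∈ (IsLocalRing.maximalIdeal (Localization.AtPrime m)) •
        (⊤ : Submodule (Localization.AtPrime m) N) := by rw [h]; exact Submodule.mem_top
    refine Submodule.smul_induction_on hz (fun ζ hζ x _ => ?_) (fun x y ihx ihy => add_mem ihx ihy)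
    obtain ⟨⟨a, s⟩, rfl⟩ := IsLocalization.mk'_surjective m.primeCompl ζ
    have ha : a ∈ m := (IsLocalization.AtPrime.mk'_mem_maximal_iff _ m a s).mp hζ
    dsimp only
    rw [IsLocalization.mk'_eq_mul_mk'_one, mul_smul, algebraMap_smul]
    exact Submodule.smul_mem_smul ha Submodule.mem_top

lemma ff_helper {m : Ideal R} [hp : m.IsPrime] {M : Type v} [AddCommGroup M] [Module R M]
    (hfl : Module.Flat (Localization.AtPrime m) (LocalizedModule m.primeCompl M))
    (hne : m • (⊤ : Submodule R (LocalizedModule m.primeCompl M)) ≠ ⊤) :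
    Module.FaithfullyFlat (Localization.AtPrime m) (LocalizedModule m.primeCompl M) := by
  rw [Module.faithfullyFlat_iff]
  refine ⟨hfl, fun mi hmi => ?_⟩
  rw [IsLocalRing.eq_maximalIdeal hmi]
  exact fun htop => hne (maxIdeal_smul_top_iff.mpr htop)

end Transfer


set_option maxHeartbeats 2000000 in
set_option synthInstance.maxHeartbeats 1000000 in
/-- w-analogue of Ishikawa's Theorem 2.1: for a w-flat module `M`
(i.e. `M_m` is flat over `R_m` for every maximal w-ideal `m`), TFAE:
(1) `A ⊗_R M` is not GV-torsion for every nonzero w-module `A`;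
(2) `B ⊗_R M` is not GV-torsion for every nonzero GV-torsion-free module `B`;
(3) `M/IM` is not GV-torsion for every proper w-ideal `I`;
(4) `M/mM` is not GV-torsion for every maximal w-ideal `m`;
(5) `M_m/mM_m ≠ 0` for every maximal w-ideal `m`;
(6) `M_m` is faithfully flat over `R_m` for every maximal w-ideal `m`. -/
theorem wFaithfullyFlat_tfae (R : Type u) [CommRing R] (M : Type u) [AddCommGroup M]
    [Module R M]
    (hflat : ∀ (m : Ideal R), IsMaxWIdeal R m → ∀ [hp : m.IsPrime],
      Module.Flat (Localization.AtPrime m) (LocalizedModule m.primeCompl M)) :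
    List.TFAE [
      ∀ (A : Type u) [AddCommGroup A] [Module R A], IsWModule R A → Nontrivial A →
        ¬ IsGVTorsion R (TensorProduct R A M),
      ∀ (B : Type u) [AddCommGroup B] [Module R B], IsGVTorsionFree R B → Nontrivial B →
        ¬ IsGVTorsion R (TensorProduct R B M),
      ∀ I : Ideal R, IsWIdeal R I → I ≠ ⊤ →
        ¬ IsGVTorsion R (M ⧸ (I • (⊤ : Submodule R M))),
      ∀ m : Ideal R, IsMaxWIdeal R m →
        ¬ IsGVTorsion R (M ⧸ (m • (⊤ : Submodule R M))),
      ∀ (m : Ideal R), IsMaxWIdeal R m → ∀ [hp : m.IsPrime],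
        m • (⊤ : Submodule R (LocalizedModule m.primeCompl M)) ≠ ⊤,
      ∀ (m : Ideal R), IsMaxWIdeal R m → ∀ [hp : m.IsPrime],
        Module.FaithfullyFlat (Localization.AtPrime m) (LocalizedModule m.primeCompl M) ] := by
  tfae_have 2 → 1 := by
    intro h2 A _ _ hw hnt
    exact h2 A hw.1 hnt
  tfae_have 3 → 4 := by
    intro h3 m hm
    exact h3 m hm.1 hm.2.1
  tfae_have 4 → 3 := by
    intro h4 I hI hne htors
    obtain ⟨m, hm, hIm⟩ := exists_maxWIdeal_ge hI hne
    refine h4 m hm (htors.of_surjective (Submodule.mapQ _ _ LinearMap.id ?_) ?_)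
    · exact fun x hx => Submodule.smul_mono hIm le_rfl hx
    · intro x
      obtain ⟨y, rfl⟩ := Submodule.Quotient.mk_surjective _ x
      exact ⟨Submodule.Quotient.mk y, rfl⟩
  tfae_have 4 → 5 := by
    intro h4 m hm hp heq
    refine h4 m hm ?_
    intro x
    obtain ⟨y, rfl⟩ := Submodule.Quotient.mk_surjective _ x
    obtain ⟨t, ht, hty⟩ := (loc_smul_top_iff m).mp heq y
    set I : Ideal R := LinearMap.ker (LinearMap.toSpanSingleton R _
      (Submodule.Quotient.mk (p := m • (⊤ : Submodule R M)) y)) with hIdef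
    have hmI : m ≤ I := by
      intro a ha
      simp only [hIdef, LinearMap.mem_ker, LinearMap.toSpanSingleton_apply]
      rw [← Submodule.Quotient.mk_smul, Submodule.Quotient.mk_eq_zero]
      exact Submodule.smul_mem_smul ha Submodule.mem_top
    have htI : t ∈ I := by
      simp only [hIdef, LinearMap.mem_ker, LinearMap.toSpanSingleton_apply]
      rw [← Submodule.Quotient.mk_smul, Submodule.Quotient.mk_eq_zero]
      exact hty
    obtain ⟨J, hJ, hJI⟩ := exists_gv_le hm hmI htI ht
    exact ⟨J, hJ, fun j hj => LinearMap.mem_ker.mp (hJI hj)⟩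
  tfae_have 5 → 4 := by
    intro h5 m hm htors
    haveI hp := hm.isPrime
    refine h5 m hm ?_
    rw [loc_smul_top_iff]
    intro y
    obtain ⟨J, hJ, hJy⟩ := htors (Submodule.Quotient.mk y)
    obtain ⟨t, htJ, htm⟩ := SetLike.not_le_iff_exists.mp (hJ.not_le_max hm)
    refine ⟨t, htm, ?_⟩
    have h0 := hJy t htJ
    rwa [← Submodule.Quotient.mk_smul, Submodule.Quotient.mk_eq_zero] at h0
  tfae_have 5 → 6 := by
    intro h5 m hm hp
    exact ff_helper (hflat m hm) (h5 m hm)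
  tfae_have 6 → 5 := by
    intro h6 m hm hp heq
    exact (h6 m hm).submodule_ne_top (IsLocalRing.maximalIdeal.isMaximal _)
      (maxIdeal_smul_top_iff.mp heq)
  tfae_have 1 → 5 := by
    intro h1 m hm hp heq
    have hy := (loc_smul_top_iff m).mp heq
    let Q := FractionRing (R ⧸ m)
    let φ : R →+* Q := (algebraMap (R ⧸ m) Q).comp (Ideal.Quotient.mk m)
    have hsmul : ∀ (r : R) (q : Q), r • q = φ r * q := fun r q => by
      rw [← algebraMap_smul (R ⧸ m) r q, Algebra.smul_def]; rfl
    let ℓ : R →ₗ[R] Q :=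
      { toFun := φ
        map_add' := fun x y => map_add φ x y
        map_smul' := fun r x => by
          simp only [RingHom.id_apply, smul_eq_mul, map_mul, hsmul] }
    have hφ0 : ∀ a ∈ m, φ a = 0 := fun a ha => by
      simp only [φ, RingHom.comp_apply]
      rw [Ideal.Quotient.eq_zero_iff_mem.mpr ha, map_zero]
    have hφne : ∀ t ∉ m, φ t ≠ 0 := by
      intro t htm h0
      simp only [φ, RingHom.comp_apply] at h0
      have h1 := (IsFractionRing.to_map_eq_zero_iff (K := Q)).mp h0
      exact htm (Ideal.Quotient.eq_zero_iff_mem.mp h1)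
    set A₀ : Submodule R Q := wSub (LinearMap.range ℓ) with hA₀
    have hmkill : ∀ a ∈ m, ∀ q : Q, a • q = 0 := fun a ha q => by
      rw [hsmul, hφ0 a ha, zero_mul]
    have hone : (1 : Q) ∈ A₀ := le_wSub ⟨1, by simp [ℓ, map_one]⟩
    haveI hnontrivA : Nontrivial A₀ := ⟨⟨⟨1, hone⟩, 0, by
      intro hcon
      exact one_ne_zero (congrArg Subtype.val hcon)⟩⟩
    have hwA : IsWModule R A₀ := by
      constructor
      · rintro x ⟨J, hJ, hx⟩
        obtain ⟨t, htJ, htm⟩ := SetLike.not_le_iff_exists.mp (hJ.not_le_max hm)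
        have h0 := congrArg Subtype.val (hx t htJ)
        rw [show ((t • x : A₀) : Q) = t • (x : Q) from rfl, hsmul] at h0
        refine Subtype.ext ?_
        rcases mul_eq_zero.mp h0 with h | h
        · exact absurd h (hφne t htm)
        · exact h
      · intro J hJ f
        obtain ⟨t, htJ, htm⟩ := SetLike.not_le_iff_exists.mp (hJ.not_le_max hm)
        set q : Q := (φ t)⁻¹ * ((f ⟨t, htJ⟩ : A₀) : Q) with hq
        have key : ∀ (j : R) (hj : j ∈ J), ((f ⟨j, hj⟩ : A₀) : Q) = j • q := by
          intro j hj
          have e1 : t • (⟨j, hj⟩ : J) = j • (⟨t, htJ⟩ : J) := by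
            ext
            simp [smul_eq_mul, mul_comm]
          have e2 : t • f ⟨j, hj⟩ = j • f ⟨t, htJ⟩ := by
            rw [← map_smul, ← map_smul, e1]
          have e3 : φ t * ((f ⟨j, hj⟩ : A₀) : Q) = φ j * ((f ⟨t, htJ⟩ : A₀) : Q) := by
            have h4 := congrArg Subtype.val e2
            rwa [show ((t • f ⟨j, hj⟩ : A₀) : Q) = t • ((f ⟨j, hj⟩ : A₀) : Q) from rfl,
              show ((j • f ⟨t, htJ⟩ : A₀) : Q) = j • ((f ⟨t, htJ⟩ : A₀) : Q) from rfl,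
              hsmul, hsmul] at h4
          rw [hsmul, hq,
            show φ j * ((φ t)⁻¹ * ((f ⟨t, htJ⟩ : A₀) : Q)) =
              (φ t)⁻¹ * (φ j * ((f ⟨t, htJ⟩ : A₀) : Q)) by ring,
            ← e3, inv_mul_cancel_left₀ (hφne t htm)]
        have hqA : q ∈ A₀ := by
          rw [hA₀]
          refine wSub_mem_of_gv hJ (fun j hj => ?_)
          rw [show j • q = ((f ⟨j, hj⟩ : A₀) : Q) from (key j hj).symm]
          exact (f ⟨j, hj⟩).2
        refine ⟨LinearMap.toSpanSingleton R A₀ ⟨q, hqA⟩, fun x => ?_⟩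
        refine Subtype.ext ?_
        have hval : ((LinearMap.toSpanSingleton R A₀ ⟨q, hqA⟩ (x : R)) : Q) = (x : R) • q := rfl
        rw [hval]
        exact (key x.1 x.2).symm
    have htors : IsGVTorsion R (TensorProduct R A₀ M) := by
      have hkill : ∀ w ∈ m • (⊤ : Submodule R M), ∀ a : A₀,
          (a ⊗ₜ[R] w : TensorProduct R A₀ M) = 0 := by
        intro w hw
        refine Submodule.smul_induction_on hw (fun c hc n _ => fun a => ?_)
          (fun x y ihx ihy => fun a => ?_)
        · have hca : c • a = (0 : A₀) := Subtype.ext (by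
            rw [show ((c • a : A₀) : Q) = c • (a : Q) from rfl, hmkill c hc]
            rfl)
          rw [TensorProduct.tmul_smul, TensorProduct.smul_tmul', hca,
            TensorProduct.zero_tmul]
        · rw [TensorProduct.tmul_add, ihx a, ihy a, add_zero]
      have hsimple : ∀ z : TensorProduct R A₀ M, ∃ t, t ∈ m.primeCompl ∧ t • z = 0 := by
        intro z
        induction z using TensorProduct.induction_on with
        | zero => exact ⟨1, Submonoid.one_mem _, smul_zero 1⟩
        | tmul a y =>
          obtain ⟨t, ht, hty⟩ := hy y
          exact ⟨t, ht, by rw [← TensorProduct.tmul_smul, hkill _ hty a]⟩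
        | add z₁ z₂ ih₁ ih₂ =>
          obtain ⟨t₁, h₁, e₁⟩ := ih₁
          obtain ⟨t₂, h₂, e₂⟩ := ih₂
          refine ⟨t₁ * t₂, mul_mem h₁ h₂, ?_⟩
          rw [smul_add, show (t₁ * t₂) • z₁ = t₂ • (t₁ • z₁) by rw [smul_smul, mul_comm],
            show (t₁ * t₂) • z₂ = t₁ • (t₂ • z₂) by rw [smul_smul], e₁, e₂,
            smul_zero, smul_zero, add_zero]
      have hmz : ∀ a ∈ m, ∀ z : TensorProduct R A₀ M, a • z = 0 := by
        intro a ha z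
        induction z using TensorProduct.induction_on with
        | zero => exact smul_zero a
        | tmul x y =>
          have hax : a • x = (0 : A₀) := Subtype.ext (by
            rw [show ((a • x : A₀) : Q) = a • (x : Q) from rfl, hmkill a ha]
            rfl)
          rw [TensorProduct.smul_tmul', hax, TensorProduct.zero_tmul]
        | add z₁ z₂ ih₁ ih₂ => rw [smul_add, ih₁, ih₂, add_zero]
      intro z
      obtain ⟨t, ht, htz⟩ := hsimple z
      set I : Ideal R := LinearMap.ker (LinearMap.toSpanSingleton R _ z) with hIdef
      have hmI : m ≤ I := fun a ha => LinearMap.mem_ker.mpr (by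
        rw [LinearMap.toSpanSingleton_apply]
        exact hmz a ha z)
      have htI : t ∈ I := LinearMap.mem_ker.mpr (by
        rw [LinearMap.toSpanSingleton_apply]
        exact htz)
      obtain ⟨J, hJ, hJI⟩ := exists_gv_le hm hmI htI ht
      refine ⟨J, hJ, fun j hj => ?_⟩
      have hker := hJI hj
      rw [hIdef, LinearMap.mem_ker, LinearMap.toSpanSingleton_apply] at hker
      exact hker
    exact h1 A₀ hwA hnontrivA htors
  tfae_have 5 → 2 := by
    intro h5 B _ _ hBtf hBnt htors
    obtain ⟨x₀, y₀, hxy⟩ := hBnt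
    set b : B := x₀ - y₀ with hb
    have hbne : b ≠ 0 := sub_ne_zero.mpr hxy
    set I : Ideal R := LinearMap.ker (LinearMap.toSpanSingleton R B b) with hIdef
    have hWproper : wSub (I : Submodule R R) ≠ (⊤ : Ideal R) := by
      intro htop
      have h1 : (1 : R) ∈ wSub (I : Submodule R R) := by rw [htop]; exact Submodule.mem_top
      obtain ⟨J, hJ, hJ1⟩ := h1
      refine hbne (hBtf b ⟨J, hJ, fun j hj => ?_⟩)
      have hji := hJ1 j hj
      rw [smul_eq_mul, mul_one] at hji
      rw [hIdef, LinearMap.mem_ker, LinearMap.toSpanSingleton_apply] at hji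
      exact hji
    obtain ⟨m, hm, hIm⟩ := exists_maxWIdeal_ge (isWIdeal_wSub I) hWproper
    haveI hp : m.IsPrime := hm.isPrime
    set S' := Localization.AtPrime m with hS'
    set N := LocalizedModule m.primeCompl M with hN
    set Bm := LocalizedModule m.primeCompl B with hBm
    haveI hff : Module.FaithfullyFlat S' N := ff_helper (hflat m hm) (h5 m hm)
    have hb0 : (LocalizedModule.mk b (1 : m.primeCompl) : Bm) ≠ 0 := by
      intro h0
      rw [show (0 : Bm) = LocalizedModule.mk 0 1 from (LocalizedModule.zero_mk _).symm] at h0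
      obtain ⟨u, hu⟩ := LocalizedModule.mk_eq.mp h0
      simp only [one_smul, smul_zero] at hu
      have humem : (u : R) ∈ I := by
        rw [hIdef, LinearMap.mem_ker, LinearMap.toSpanSingleton_apply]
        exact hu
      exact u.2 (hIm (le_wSub humem))
    haveI hsc : SMulCommClass S' R Bm := ⟨fun s r x => by
      rw [← algebraMap_smul S' r x, ← algebraMap_smul S' r (s • x), smul_smul, smul_smul,
        mul_comm]⟩
    have hTsmul : ∀ (c : R) (u : Bm) (v : N),
        (algebraMap R S' c) • (u ⊗ₜ[S'] v) = c • (u ⊗ₜ[S'] v) := fun c u v => by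
      rw [TensorProduct.smul_tmul', TensorProduct.smul_tmul', algebraMap_smul]
    set β : B →ₗ[R] M →ₗ[R] (TensorProduct S' Bm N) := LinearMap.mk₂ R
      (fun b' y' => (LocalizedModule.mk b' 1 : Bm) ⊗ₜ[S'] (LocalizedModule.mk y' 1 : N))
      (fun b₁ b₂ y' => by
        rw [show (LocalizedModule.mk (b₁ + b₂) 1 : Bm) =
            LocalizedModule.mk b₁ 1 + LocalizedModule.mk b₂ 1 by
          rw [LocalizedModule.mk_add_mk]; simp, TensorProduct.add_tmul])
      (fun c b' y' => by
        rw [show (LocalizedModule.mk (c • b') 1 : Bm) = c • LocalizedModule.mk b' 1 from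
            (LocalizedModule.smul'_mk c b' 1).symm,
          ← algebraMap_smul S' c (LocalizedModule.mk b' 1 : Bm),
          ← TensorProduct.smul_tmul', hTsmul])
      (fun b' y₁ y₂ => by
        rw [show (LocalizedModule.mk (y₁ + y₂) 1 : N) =
            LocalizedModule.mk y₁ 1 + LocalizedModule.mk y₂ 1 by
          rw [LocalizedModule.mk_add_mk]; simp, TensorProduct.tmul_add])
      (fun c b' y' => by
        rw [show (LocalizedModule.mk (c • y') 1 : N) = c • LocalizedModule.mk y' 1 from
            (LocalizedModule.smul'_mk c y' 1).symm,
          ← algebraMap_smul S' c (LocalizedModule.mk y' 1 : N),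
          TensorProduct.tmul_smul, hTsmul]) with hβ
    set τ := TensorProduct.lift β with hτ
    have hτ0 : ∀ (b' : B) (y' : M),
        ((LocalizedModule.mk b' 1 : Bm) ⊗ₜ[S'] (LocalizedModule.mk y' 1 : N)) = 0 := by
      intro b' y'
      obtain ⟨J, hJ, hJz⟩ := htors (b' ⊗ₜ y')
      obtain ⟨t, htJ, htm⟩ := SetLike.not_le_iff_exists.mp (hJ.not_le_max hm)
      have h0 : (t • b') ⊗ₜ[R] y' = (0 : TensorProduct R B M) := by
        rw [← TensorProduct.smul_tmul']
        exact hJz t htJ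
      have hτeq := congrArg τ h0
      rw [map_zero, hτ, TensorProduct.lift.tmul, hβ, LinearMap.mk₂_apply] at hτeq
      have hmk : (LocalizedModule.mk (t • b') (1 : m.primeCompl) : Bm) =
          (algebraMap R S' t) • LocalizedModule.mk b' 1 := by
        rw [algebraMap_smul, LocalizedModule.smul'_mk]
      rw [hmk, ← TensorProduct.smul_tmul'] at hτeq
      exact ((IsLocalization.map_units (M := m.primeCompl) S' ⟨t, htm⟩).smul_eq_zero).mp hτeq
    have hzero : ∀ w : TensorProduct S' Bm N, w = 0 := by
      intro w
      induction w using TensorProduct.induction_on with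
      | zero => rfl
      | tmul u v =>
        induction u using LocalizedModule.induction_on with
        | h b' s =>
          induction v using LocalizedModule.induction_on with
          | h y' s₂ =>
            have h1 : (LocalizedModule.mk b' s : Bm) =
                (Localization.mk 1 s : S') • LocalizedModule.mk b' 1 := by
              rw [LocalizedModule.mk_smul_mk]; simp
            have h2 : (LocalizedModule.mk y' s₂ : N) =
                (Localization.mk 1 s₂ : S') • LocalizedModule.mk y' 1 := by
              rw [LocalizedModule.mk_smul_mk]; simp
            rw [h1, h2, ← TensorProduct.smul_tmul', TensorProduct.tmul_smul, hτ0,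
              smul_zero, smul_zero]
      | add w₁ w₂ ih₁ ih₂ => rw [ih₁, ih₂, add_zero]
    haveI hsub : Subsingleton (TensorProduct S' Bm N) := ⟨fun a b => by rw [hzero a, hzero b]⟩
    set X : Submodule S' Bm := Submodule.span S' {(LocalizedModule.mk b 1 : Bm)} with hX
    haveI hXnt : Nontrivial X := ⟨⟨⟨_, Submodule.mem_span_singleton_self _⟩, 0,
      fun hc => hb0 (congrArg Subtype.val hc)⟩⟩
    haveI hTnt : Nontrivial (TensorProduct S' X N) :=
      Module.FaithfullyFlat.rTensor_nontrivial S' N X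
    have hinj : Function.Injective (LinearMap.rTensor N X.subtype) :=
      Module.Flat.rTensor_preserves_injective_linearMap X.subtype
        (Submodule.injective_subtype X)
    haveI : Subsingleton (TensorProduct S' X N) := ⟨fun a b => hinj (Subsingleton.elim _ _)⟩
    exact false_of_nontrivial_of_subsingleton (TensorProduct S' X N)
  tfae_finish
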